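/- Let E be a group and C a subgroup of the center of E, and suppose the quotient H = E/C is perfect. Then the commutator subgroup E' = ⁅E, E⁆ maps onto H under the quotient map (equivalently E' · C = E), and E' is itself perfect (⁅E', E'⁆ = E'). -/

import Mathlib

open Pointwise
open scoped commutatorElement

lemma comm_central_left {E : Type} [Group E] {c : E} (hc : c ∈ Subgroup.center E)
    (g h : E) : ⁅g * c, h⁆ = ⁅g, h⁆ := by
  have hch : c * h = h * c := (Subgroup.mem_center_iff.mp hc h).symm
  rw [commutatorElement_def, commutatorElement_def, mul_inv_rev,
    show g * c * h = g * h * c by rw [mul_assoc, hch, mul_assoc]]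
  group

lemma comm_central_right {E : Type} [Group E] {d : E} (hd : d ∈ Subgroup.center E)
    (g h : E) : ⁅g, h * d⁆ = ⁅g, h⁆ := by
  rw [← commutatorElement_inv, comm_central_left hd, commutatorElement_inv]

/-- Let `C` be a central subgroup of `E` with `H = E/C` perfect.  Then
the commutator subgroup `E' = ⁅E, E⁆` maps onto `H` under the quotient map (equivalently
`E' · C = E`), and `E'` is itself perfect. -/
theorem commutator_surjects_and_perfect {E : Type} [Group E]
    (C : Subgroup E) [C.Normal] (hC : C ≤ Subgroup.center E)
    (hperf : commutator (E ⧸ C) = ⊤) :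
    Subgroup.map (QuotientGroup.mk' C) (commutator E) = ⊤ ∧
    commutator E ⊔ C = ⊤ ∧
    ⁅commutator E, commutator E⁆ = commutator E := by
  have hsurj : Function.Surjective (QuotientGroup.mk' C) := QuotientGroup.mk'_surjective C
  have h1 : Subgroup.map (QuotientGroup.mk' C) (commutator E) = ⊤ := by
    rw [commutator_def, Subgroup.map_commutator, Subgroup.map_top_of_surjective _ hsurj,
      ← commutator_def, hperf]
  have h2 : commutator E ⊔ C = ⊤ := by
    have := congrArg (Subgroup.comap (QuotientGroup.mk' C)) h1
    rwa [Subgroup.comap_map_eq, QuotientGroup.ker_mk', Subgroup.comap_top] at this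
  refine ⟨h1, h2, le_antisymm
    ((Subgroup.commutator_mono le_top le_top).trans_eq (commutator_def E).symm) ?_⟩
  have key : ⁅(⊤ : Subgroup E), ⊤⁆ ≤ ⁅commutator E, commutator E⁆ := by
    rw [Subgroup.commutator_le]
    intro x _ y _
    have hx : x ∈ ((commutator E : Set E) * (C : Set E)) := by
      rw [← Subgroup.mul_normal, h2]; trivial
    have hy : y ∈ ((commutator E : Set E) * (C : Set E)) := by
      rw [← Subgroup.mul_normal, h2]; trivial
    obtain ⟨a, ha, c, hc, rfl⟩ := hx
    obtain ⟨b, hb, d, hd, rfl⟩ := hy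
    rw [comm_central_left (hC hc), comm_central_right (hC hd)]
    exact Subgroup.commutator_mem_commutator ha hb
  calc commutator E = ⁅(⊤ : Subgroup E), ⊤⁆ := commutator_def E
    _ ≤ ⁅commutator E, commutator E⁆ := key
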